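/- For every integer w ≥ 1 and every even integer n ≥ 0, the partition function of loops satisfies Z_{n,w}(2,2) = (2^{n}/w) · Σ_{k=0}^{w−1} cosⁿ(kπ/w). -/

import Mathlib

/-- A loop of length `n` in the slit of width `w`: a nearest-neighbour path of heights
`h 0, …, h n` with `h 0 = h n = 0` and all heights in `{0, …, w}` (enforced by taking
values in `Fin (w+1)`). -/
def IsLoop {n w : ℕ} (h : Fin (n + 1) → Fin (w + 1)) : Prop :=
  h 0 = 0 ∧ h (Fin.last n) = 0 ∧
    ∀ i : Fin n, |((h i.succ : ℤ) - (h i.castSucc : ℤ))| = 1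

instance {n w : ℕ} (h : Fin (n + 1) → Fin (w + 1)) : Decidable (IsLoop h) := by
  unfold IsLoop; infer_instance

/-- The partition function of loops,
`Z_{n,w}(a,b) = Σ_h a^{u(h)} b^{v(h)}`, where `u(h)` counts visits to the bottom wall
(excluding the zeroth vertex) and `v(h)` counts visits to the top wall. -/
noncomputable def Z (n w : ℕ) (a b : ℝ) : ℝ :=
  ∑ h : Fin (n + 1) → Fin (w + 1),
    if IsLoop h then
      a ^ (Finset.univ.filter fun i : Fin (n + 1) => i ≠ 0 ∧ (h i : ℕ) = 0).card *
      b ^ (Finset.univ.filter fun i : Fin (n + 1) => (h i : ℕ) = w).card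
    else 0


open Finset


noncomputable def wt (w y : ℕ) : ℝ := if y = 0 ∨ y = w then 2 else 1
def sfold (w : ℕ) (s : ℤ) : ℕ := min (s % (2*w)).toNat (2*w - (s % (2*w)).toNat)
noncomputable def tc (w : ℕ) (x z : ℕ) : ℝ := if x = z + 1 ∨ x + 1 = z then wt w z else 0

lemma emod_lt' (w : ℕ) (hw : 1 ≤ w) (s : ℤ) : (s % (2*(w:ℤ))).toNat < 2*w := by
  have h0 : (0:ℤ) < 2*(w:ℤ) := by positivity
  have h1 := Int.emod_nonneg s (ne_of_gt h0)
  have h2 := Int.emod_lt_of_pos s h0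
  omega

lemma toNat_emod_add_one' (w : ℕ) (hw : 1 ≤ w) (s : ℤ) :
    ((s+1) % (2*(w:ℤ))).toNat = ((s % (2*(w:ℤ))).toNat + 1) % (2*w) := by
  have h0 : (0:ℤ) < 2*(w:ℤ)  := by positivity
  have h1 := Int.emod_nonneg s (ne_of_gt h0)
  have key : (s+1) % (2*(w:ℤ)) = ((s % (2*(w:ℤ))).toNat + 1 : ℕ) % ((2*w : ℕ) : ℤ) := by
    push_cast
    rw [Int.toNat_of_nonneg h1, Int.emod_add_emod]
  rw [key, ← Int.natCast_emod, Int.toNat_natCast]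

lemma toNat_emod_sub_one' (w : ℕ) (hw : 1 ≤ w) (s : ℤ) :
    ((s-1) % (2*(w:ℤ))).toNat = ((s % (2*(w:ℤ))).toNat + (2*w - 1)) % (2*w) := by
  have h0 : (0:ℤ) < 2*(w:ℤ)  := by positivity
  have h1 := Int.emod_nonneg s (ne_of_gt h0)
  have e1 : s - 1 = s + ((2*w:ℕ) - 1 : ℕ) + (2*(w:ℤ)) * (-1) := by ring_nf; omega
  have key : (s-1) % (2*(w:ℤ)) = ((s % (2*(w:ℤ))).toNat + (2*w - 1 : ℕ) : ℕ) % ((2*w : ℕ) : ℤ) := by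
    rw [e1, Int.add_mul_emod_self_left]
    push_cast
    rw [Int.toNat_of_nonneg h1, Int.emod_add_emod]
  rw [key, ← Int.natCast_emod, Int.toNat_natCast]

set_option maxHeartbeats 2000000 in
lemma fold_pm {w : ℕ} (hw : 1 ≤ w) (s : ℤ) (x : ℕ) (hx : x ≤ w) :
    ((if sfold w (s+1) = x then (1:ℝ) else 0) + (if sfold w (s-1) = x then 1 else 0))
      = tc w x (sfold w s) := by
  obtain ⟨r, hr⟩ : ∃ r, (s % (2*(w:ℤ))).toNat = r := ⟨_, rfl⟩
  have hrlt : r < 2*w := hr ▸ emod_lt' w hw s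
  have h3 : sfold w s = min r (2*w - r) := by rw [sfold, hr]
  have h1 : sfold w (s+1) = min ((r + 1) % (2*w)) (2*w - (r + 1) % (2*w)) := by
    rw [sfold, toNat_emod_add_one' w hw s, hr]
  have h2 : sfold w (s-1) = min ((r + (2*w-1)) % (2*w)) (2*w - (r + (2*w-1)) % (2*w)) := by
    rw [sfold, toNat_emod_sub_one' w hw s, hr]
  have d1 : ((r + 1) % (2*w) = r + 1 ∧ r + 1 < 2*w) ∨ (r + 1 = 2*w ∧ (r+1) % (2*w) = 0) := by
    rcases Nat.lt_or_ge (r+1) (2*w) with h | h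
    · exact Or.inl ⟨Nat.mod_eq_of_lt h, h⟩
    · have he : r + 1 = 2*w := by omega
      exact Or.inr ⟨he, by rw [he, Nat.mod_self]⟩
  have d2 : (r ≠ 0 ∧ (r + (2*w-1)) % (2*w) = r - 1) ∨ (r = 0 ∧ (r + (2*w-1)) % (2*w) = 2*w-1) := by
    rcases Nat.eq_zero_or_pos r with h | h
    · refine Or.inr ⟨h, ?_⟩
      rw [h, Nat.zero_add]
      exact Nat.mod_eq_of_lt (by omega)
    · refine Or.inl ⟨by omega, ?_⟩
      have e : r + (2*w-1) = (r-1) + 2*w := by omega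
      rw [e, Nat.add_mod_right]
      exact Nat.mod_eq_of_lt (by omega)
  obtain ⟨A, hA⟩ : ∃ A, (r + 1) % (2*w) = A := ⟨_, rfl⟩
  obtain ⟨B, hB⟩ : ∃ B, (r + (2*w-1)) % (2*w) = B := ⟨_, rfl⟩
  rw [hA] at h1 d1
  rw [hB] at h2 d2
  clear hr hA hB
  simp only [Nat.min_def] at h1 h2 h3
  unfold tc wt
  split_ifs at h1 h2 h3 ⊢ <;> first | (exfalso; omega) | norm_num

def Ssum (n : ℕ) (ε : Fin n → Bool) : ℤ := ∑ i, if ε i then 1 else -1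

lemma fold_le (w : ℕ) (s : ℤ) : sfold w s ≤ w := by unfold sfold; omega

def sfoldF (w : ℕ) (s : ℤ) : Fin (w+1) := ⟨sfold w s, Nat.lt_succ_of_le (fold_le w s)⟩

noncomputable def Nc (w n : ℕ) (x : Fin (w+1)) : ℝ :=
  ∑ ε : Fin n → Bool, if sfoldF w (Ssum n ε) = x then 1 else 0

noncomputable def P (w n : ℕ) (x : Fin (w+1)) : ℝ :=
  ∑ h : Fin (n + 1) → Fin (w + 1),
    if h 0 = 0 ∧ (∀ i : Fin n, |((h i.succ : ℤ) - (h i.castSucc : ℤ))| = 1) ∧ h (Fin.last n) = x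
    then ∏ i : Fin n, wt w (h i.castSucc : ℕ) else 0


lemma fold_zero_iff {w : ℕ} (hw : 1 ≤ w) (s : ℤ) : sfold w s = 0 ↔ (2*(w:ℤ)) ∣ s := by
  have h0 : (0:ℤ) < 2*(w:ℤ) := by positivity
  have h1 := Int.emod_nonneg s (ne_of_gt h0)
  have h2 := Int.emod_lt_of_pos s h0
  rw [Int.dvd_iff_emod_eq_zero]
  unfold sfold
  omega

lemma Ssum_snoc (n : ℕ) (ε : Fin n → Bool) (b : Bool) :
    Ssum (n+1) (Fin.snoc ε b) = Ssum n ε + (if b then 1 else -1) := by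
  unfold Ssum
  rw [Fin.sum_univ_castSucc]
  simp [Fin.snoc_castSucc, Fin.snoc_last]

lemma Nc_zero {w : ℕ} (x : Fin (w+1)) : Nc w 0 x = if x = 0 then 1 else 0 := by
  unfold Nc Ssum
  rw [Fintype.sum_eq_single (fun i : Fin 0 => true)]
  · congr 1
    · rw [Fin.ext_iff]
      simp [sfoldF, sfold, eq_comm]
  · intro f hf
    exact absurd (funext fun i => i.elim0) hf

lemma P_zero {w : ℕ} (x : Fin (w+1)) : P w 0 x = if x = 0 then 1 else 0 := by
  unfold P
  rw [Fintype.sum_eq_single (fun _ : Fin 1 => (0 : Fin (w+1)))]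
  · simp only [Fin.last]
    by_cases hx : x = 0 <;> simp [hx, eq_comm]
  · intro f hf
    by_cases h0 : f 0 = 0
    · have : f = fun _ => (0 : Fin (w+1)) := funext fun i => by
        have : i = 0 := Subsingleton.elim i 0
        rw [this, h0]
      exact absurd this hf
    · rw [if_neg]
      rintro ⟨hc, -, -⟩
      exact h0 hc

lemma sfoldF_eq_iff {w : ℕ} (s : ℤ) (x : Fin (w+1)) : sfoldF w s = x ↔ sfold w s = (x:ℕ) :=
  Fin.ext_iff

lemma Nc_succ {w : ℕ} (hw : 1 ≤ w) (n : ℕ) (x : Fin (w+1)) :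
    Nc w (n+1) x = ∑ z : Fin (w+1), tc w (x:ℕ) (z:ℕ) * Nc w n z := by
  unfold Nc
  rw [← (Fin.snocEquiv (fun _ : Fin (n+1) => Bool)).sum_comp
      (fun ε => if sfoldF w (Ssum (n+1) ε) = x then (1:ℝ) else 0),
    Fintype.sum_prod_type]
  rw [Finset.sum_comm]
  have step : ∀ ε : Fin n → Bool,
      (∑ b : Bool, if sfoldF w (Ssum (n+1) ((Fin.snocEquiv (fun _ : Fin (n+1) => Bool)) (b, ε))) = x
          then (1:ℝ) else 0)
        = ∑ z : Fin (w+1), if sfoldF w (Ssum n ε) = z then tc w (x:ℕ) (z:ℕ) else 0 := by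
    intro ε
    rw [Fintype.sum_bool]
    have e1 : ((Fin.snocEquiv (fun _ : Fin (n+1) => Bool)) (true, ε)) = Fin.snoc ε true := rfl
    have e2 : ((Fin.snocEquiv (fun _ : Fin (n+1) => Bool)) (false, ε)) = Fin.snoc ε false := rfl
    simp only [e1, e2, Ssum_snoc, reduceIte, Bool.false_eq_true, if_false, ← sub_eq_add_neg]
    rw [Finset.sum_ite_eq Finset.univ (sfoldF w (Ssum n ε)) (fun z => tc w (x:ℕ) (z:ℕ)),
      if_pos (Finset.mem_univ _)]
    simp only [sfoldF_eq_iff]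
    exact fold_pm hw (Ssum n ε) (x:ℕ) x.is_le
  rw [Finset.sum_congr rfl fun ε _ => step ε, Finset.sum_comm]
  refine Finset.sum_congr rfl fun z _ => ?_
  rw [Finset.mul_sum]
  exact Finset.sum_congr rfl fun ε _ => by rw [mul_ite, mul_one, mul_zero]

lemma adj_iff (a b : ℕ) : |(a:ℤ) - (b:ℤ)| = 1 ↔ (a = b + 1 ∨ a + 1 = b) := by
  rw [abs_eq (by norm_num : (0:ℤ) ≤ 1)]
  omega

lemma P_succ {w : ℕ} (n : ℕ) (x : Fin (w+1)) :
    P w (n+1) x = ∑ z : Fin (w+1), tc w (x:ℕ) (z:ℕ) * P w n z := by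
  unfold P
  rw [← (Fin.snocEquiv (fun _ : Fin (n+2) => Fin (w+1))).sum_comp
      (fun h : Fin (n+2) → Fin (w+1) =>
        if h 0 = 0 ∧ (∀ i : Fin (n+1), |((h i.succ : ℤ) - (h i.castSucc : ℤ))| = 1)
            ∧ h (Fin.last (n+1)) = x
        then ∏ i : Fin (n+1), wt w (h i.castSucc : ℕ) else 0),
    Fintype.sum_prod_type]
  simp only [Fin.snocEquiv_apply]
  have key : ∀ (y : Fin (w+1)) (g : Fin (n+1) → Fin (w+1)),
      (if (Fin.snoc g y : Fin (n+2) → Fin (w+1)) 0 = 0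
          ∧ (∀ i : Fin (n+1), |(((Fin.snoc g y : Fin (n+2) → Fin (w+1)) i.succ : ℤ)
              - ((Fin.snoc g y : Fin (n+2) → Fin (w+1)) i.castSucc : ℤ))| = 1)
          ∧ (Fin.snoc g y : Fin (n+2) → Fin (w+1)) (Fin.last (n+1)) = x
        then ∏ i : Fin (n+1), wt w ((Fin.snoc g y : Fin (n+2) → Fin (w+1)) i.castSucc : ℕ) else 0)
      = (if y = x then
          (if g 0 = 0 ∧ (∀ i : Fin n, |((g i.succ : ℤ) - (g i.castSucc : ℤ))| = 1)
              ∧ |((y : ℤ) - (g (Fin.last n) : ℤ))| = 1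
           then (∏ i : Fin n, wt w (g i.castSucc : ℕ)) * wt w (g (Fin.last n) : ℕ) else 0)
         else 0) := by
    intro y g
    have c0 : (0 : Fin (n+2)) = Fin.castSucc (0 : Fin (n+1)) := rfl
    simp only [c0, Fin.snoc_castSucc, Fin.forall_fin_succ', Fin.succ_castSucc,
      Fin.snoc_castSucc, Fin.succ_last, Fin.snoc_last, Fin.prod_univ_castSucc]
    by_cases hy : y = x
    · subst hy
      rw [if_pos rfl]
      exact if_congr (by tauto) rfl rfl
    · rw [if_neg hy, if_neg (by rintro ⟨-, -, h⟩; exact hy h)]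
  rw [Finset.sum_congr rfl fun y _ => Finset.sum_congr rfl fun g _ => key y g]
  have pull : ∀ y : Fin (w+1), (∑ g : Fin (n+1) → Fin (w+1), if y = x then
      (if g 0 = 0 ∧ (∀ i : Fin n, |((g i.succ : ℤ) - (g i.castSucc : ℤ))| = 1)
          ∧ |((y : ℤ) - (g (Fin.last n) : ℤ))| = 1
       then (∏ i : Fin n, wt w (g i.castSucc : ℕ)) * wt w (g (Fin.last n) : ℕ) else 0) else 0)
      = if y = x then (∑ g : Fin (n+1) → Fin (w+1),
      (if g 0 = 0 ∧ (∀ i : Fin n, |((g i.succ : ℤ) - (g i.castSucc : ℤ))| = 1)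
          ∧ |((y : ℤ) - (g (Fin.last n) : ℤ))| = 1
       then (∏ i : Fin n, wt w (g i.castSucc : ℕ)) * wt w (g (Fin.last n) : ℕ) else 0)) else 0 := by
    intro y
    split_ifs <;> simp
  rw [Finset.sum_congr rfl fun y _ => pull y,
    Finset.sum_ite_eq' Finset.univ x, if_pos (Finset.mem_univ _)]
  have fiber : ∀ g : Fin (n+1) → Fin (w+1),
      (if g 0 = 0 ∧ (∀ i : Fin n, |((g i.succ : ℤ) - (g i.castSucc : ℤ))| = 1)
          ∧ |((x : ℤ) - (g (Fin.last n) : ℤ))| = 1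
       then (∏ i : Fin n, wt w (g i.castSucc : ℕ)) * wt w (g (Fin.last n) : ℕ) else 0)
      = ∑ z : Fin (w+1), tc w (x:ℕ) (z:ℕ) *
        (if g 0 = 0 ∧ (∀ i : Fin n, |((g i.succ : ℤ) - (g i.castSucc : ℤ))| = 1)
            ∧ g (Fin.last n) = z
         then ∏ i : Fin n, wt w (g i.castSucc : ℕ) else 0) := by
    intro g
    rw [Finset.sum_eq_single (g (Fin.last n))]
    · have hadj : |((x : ℤ) - (g (Fin.last n) : ℤ))| = 1
          ↔ ((x:ℕ) = (g (Fin.last n) : ℕ) + 1 ∨ (x:ℕ) + 1 = (g (Fin.last n) : ℕ)) := by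
        rw [abs_eq (by norm_num : (0:ℤ) ≤ 1)]
        omega
      unfold tc
      by_cases hC : g 0 = 0 ∧ (∀ i : Fin n, |((g i.succ : ℤ) - (g i.castSucc : ℤ))| = 1)
      · by_cases hA : (x:ℕ) = (g (Fin.last n) : ℕ) + 1 ∨ (x:ℕ) + 1 = (g (Fin.last n) : ℕ)
        · rw [if_pos ⟨hC.1, hC.2, hadj.mpr hA⟩, if_pos hA, if_pos ⟨hC.1, hC.2, rfl⟩]
          ring
        · have n1 : ¬(g 0 = 0 ∧ (∀ i : Fin n, |((g i.succ : ℤ) - (g i.castSucc : ℤ))| = 1)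
              ∧ |((x : ℤ) - (g (Fin.last n) : ℤ))| = 1) := fun hc => hA (hadj.mp hc.2.2)
          rw [if_neg n1, if_neg hA, zero_mul]
      · have n1 : ¬(g 0 = 0 ∧ (∀ i : Fin n, |((g i.succ : ℤ) - (g i.castSucc : ℤ))| = 1)
            ∧ |((x : ℤ) - (g (Fin.last n) : ℤ))| = 1) := fun hc => hC ⟨hc.1, hc.2.1⟩
        have n2 : ¬(g 0 = 0 ∧ (∀ i : Fin n, |((g i.succ : ℤ) - (g i.castSucc : ℤ))| = 1)
            ∧ g (Fin.last n) = g (Fin.last n)) := fun hc => hC ⟨hc.1, hc.2.1⟩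
        rw [if_neg n1, if_neg n2, mul_zero]
    · intro z _ hz
      have n2 : ¬(g 0 = 0 ∧ (∀ i : Fin n, |((g i.succ : ℤ) - (g i.castSucc : ℤ))| = 1)
          ∧ g (Fin.last n) = z) := fun hc => hz hc.2.2.symm
      rw [if_neg n2, mul_zero]
    · intro h
      exact absurd (Finset.mem_univ _) h
  rw [Finset.sum_congr rfl fun g _ => fiber g, Finset.sum_comm]
  refine Finset.sum_congr rfl fun z _ => ?_
  rw [Finset.mul_sum]

lemma P_eq_Nc {w : ℕ} (hw : 1 ≤ w) (n : ℕ) (x : Fin (w+1)) : P w n x = Nc w n x := by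
  induction n generalizing x with
  | zero => rw [Nc_zero, P_zero]
  | succ n ih =>
    rw [Nc_succ hw, P_succ]
    exact Finset.sum_congr rfl fun z _ => by rw [ih]

lemma Z_eq_P (w n : ℕ) (hw : 1 ≤ w) : Z n w 2 2 = P w n 0 := by
  unfold Z P
  refine Finset.sum_congr rfl fun h _ => ?_
  by_cases hL : IsLoop h
  · obtain ⟨h0, hlast, hsteps⟩ := hL
    rw [if_pos ⟨h0, hlast, hsteps⟩, if_pos ⟨h0, hsteps, hlast⟩]
    have hval : ∀ y : Fin (w+1), wt w (y:ℕ)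
        = 2 ^ ((if (y:ℕ) = 0 then 1 else 0) + (if (y:ℕ) = w then 1 else 0)) := by
      intro y
      unfold wt
      split_ifs <;> first | (exfalso; omega) | norm_num
    have hz : (h 0 : ℕ) = 0 := by rw [h0]; rfl
    have hl : (h (Fin.last n) : ℕ) = 0 := by rw [hlast]; rfl
    have key1 : (Finset.univ.filter fun i : Fin (n + 1) => i ≠ 0 ∧ (h i : ℕ) = 0).card
        = ∑ i : Fin n, (if (h i.castSucc : ℕ) = 0 then 1 else 0) := by
      rw [Finset.card_filter]
      rw [Fin.sum_univ_succ (fun i : Fin (n+1) => if i ≠ 0 ∧ (h i : ℕ) = 0 then 1 else 0)]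
      simp only [ne_eq, not_true_eq_false, false_and, if_false, Fin.succ_ne_zero,
        not_false_eq_true, true_and, zero_add]
      have e1 := Fin.sum_univ_succ (fun i : Fin (n+1) => if (h i : ℕ) = 0 then (1:ℕ) else 0)
      have e2 := Fin.sum_univ_castSucc (fun i : Fin (n+1) => if (h i : ℕ) = 0 then (1:ℕ) else 0)
      rw [hz] at e1
      rw [hl] at e2
      simp only [if_pos rfl] at e1 e2
      omega
    have key2 : (Finset.univ.filter fun i : Fin (n + 1) => (h i : ℕ) = w).card
        = ∑ i : Fin n, (if (h i.castSucc : ℕ) = w then 1 else 0) := by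
      rw [Finset.card_filter]
      rw [Fin.sum_univ_castSucc (fun i : Fin (n+1) => if (h i : ℕ) = w then 1 else 0)]
      rw [hl, if_neg (by omega), add_zero]
    rw [key1, key2, ← pow_add, ← Finset.sum_add_distrib]
    rw [← Finset.prod_pow_eq_pow_sum]
    exact Finset.prod_congr rfl fun i _ => (hval (h i.castSucc)).symm
  · rw [if_neg hL, if_neg (fun hc => hL ⟨hc.1, hc.2.2, hc.2.1⟩)]

open Complex in
lemma indicator_eq_sum_exp (m : ℕ) (hm : 1 ≤ m) (s : ℤ) :
    (if (m:ℤ) ∣ s then ((m:ℕ):ℂ) else 0)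
      = ∑ j ∈ Finset.range m, Complex.exp (2 * Real.pi * Complex.I * j * s / m) := by
  have hm0 : (m:ℂ) ≠ 0 := Nat.cast_ne_zero.2 (by omega)
  have hterm : ∀ j ∈ Finset.range m, Complex.exp (2 * Real.pi * Complex.I * j * s / m)
      = (Complex.exp (2 * Real.pi * Complex.I * s / m)) ^ j := by
    intro j _
    rw [← Complex.exp_nat_mul]
    congr 1
    ring
  rw [Finset.sum_congr rfl hterm]
  by_cases hdvd : (m:ℤ) ∣ s
  · obtain ⟨c, hc⟩ := hdvd
    have hq : Complex.exp (2 * Real.pi * Complex.I * s / m) = 1 := by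
      have : (2 * (Real.pi:ℂ) * Complex.I * s / m) = (c:ℂ) * (2 * Real.pi * Complex.I) := by
        rw [hc]
        push_cast
        field_simp
      rw [this]
      exact Complex.exp_int_mul_two_pi_mul_I c
    rw [if_pos ⟨c, hc⟩, hq]
    simp
  · rw [if_neg hdvd]
    have h2pi : (2 * (Real.pi:ℂ) * Complex.I) ≠ 0 := by
      simp [Real.pi_ne_zero, Complex.I_ne_zero]
    have hq1 : Complex.exp (2 * Real.pi * Complex.I * s / m) ≠ 1 := by
      intro hexp
      rw [Complex.exp_eq_one_iff] at hexp
      obtain ⟨k, hk⟩ := hexp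
      apply hdvd
      refine ⟨k, ?_⟩
      have hsc : (s:ℂ) = (m:ℂ) * k := by
        have h1 : 2 * (Real.pi:ℂ) * Complex.I * s = 2 * (Real.pi:ℂ) * Complex.I * ((m:ℂ) * k) := by
          field_simp at hk
          linear_combination (2 * (Real.pi:ℂ) * Complex.I) * hk
        exact mul_left_cancel₀ h2pi h1
      exact_mod_cast hsc
    rw [geom_sum_eq hq1]
    have hqm : Complex.exp (2 * Real.pi * Complex.I * s / m) ^ m = 1 := by
      rw [← Complex.exp_nat_mul]
      have : (m:ℂ) * (2 * Real.pi * Complex.I * s / m) = (s:ℂ) * (2 * Real.pi * Complex.I) := by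
        field_simp
      rw [this]
      exact Complex.exp_int_mul_two_pi_mul_I s
    rw [hqm, sub_self, zero_div]

lemma Nc_eval (w n : ℕ) (hw : 1 ≤ w) (hn : Even n) :
    Nc w n 0 = 2 ^ n / (w : ℝ) *
      ∑ k ∈ Finset.range w, Real.cos ((k : ℝ) * Real.pi / (w : ℝ)) ^ n := by
  have hw0 : (w:ℝ) ≠ 0 := Nat.cast_ne_zero.2 (by omega)
  have hwC : (w:ℂ) ≠ 0 := Nat.cast_ne_zero.2 (by omega)
  have hmC : ((2*w:ℕ):ℂ) ≠ 0 := Nat.cast_ne_zero.2 (by omega)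
  have h1 : Nc w n 0 = ∑ ε : Fin n → Bool, if (2*(w:ℤ)) ∣ Ssum n ε then (1:ℝ) else 0 := by
    unfold Nc
    refine Finset.sum_congr rfl fun ε _ => ?_
    refine if_congr ?_ rfl rfl
    rw [sfoldF_eq_iff]
    exact fold_zero_iff hw (Ssum n ε)
  have key : (∑ ε : Fin n → Bool, if (2*(w:ℤ)) ∣ Ssum n ε then (1:ℂ) else 0) * ((2*w : ℕ): ℂ)
      = ∑ j ∈ Finset.range (2*w), (((2 * Real.cos ((j:ℝ) * Real.pi / w)) ^ n : ℝ) : ℂ) := by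
    rw [Finset.sum_mul]
    have e0 : ∀ ε : Fin n → Bool, (if (2*(w:ℤ)) ∣ Ssum n ε then (1:ℂ) else 0) * ((2*w : ℕ): ℂ)
        = if ((2*w:ℕ):ℤ) ∣ Ssum n ε then ((2*w:ℕ):ℂ) else 0 := by
      intro ε
      have e : ((2*w:ℕ):ℤ) = 2*(w:ℤ) := by push_cast; ring
      rw [e]
      split_ifs <;> simp
    rw [Finset.sum_congr rfl fun ε _ => (e0 ε).trans
      (indicator_eq_sum_exp (2*w) (by omega) (Ssum n ε))]
    rw [Finset.sum_comm]
    refine Finset.sum_congr rfl fun j hj => ?_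
    have expand : ∀ ε : Fin n → Bool,
        Complex.exp (2 * Real.pi * Complex.I * j * (Ssum n ε) / (2*w:ℕ))
          = ∏ i : Fin n,
            Complex.exp (2 * Real.pi * Complex.I * j * (if ε i then (1:ℂ) else -1) / (2*w:ℕ)) := by
      intro ε
      rw [← Complex.exp_sum]
      congr 1
      have hS : ((Ssum n ε : ℤ) : ℂ) = ∑ i : Fin n, (if ε i then (1:ℂ) else -1) := by
        unfold Ssum
        push_cast [apply_ite (fun x : ℤ => (x:ℂ))]
        rfl
      rw [hS, Finset.mul_sum, Finset.sum_div]
    rw [Finset.sum_congr rfl fun ε _ => expand ε]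
    rw [← Fintype.piFinset_univ,
      Finset.sum_prod_piFinset (Finset.univ : Finset Bool) (fun (i : Fin n) (b : Bool) =>
        Complex.exp ((2 * Real.pi * Complex.I * j * if b then (1:ℂ) else -1) / ((2*w:ℕ):ℂ)))]
    have hbool : ∀ i : Fin n, (∑ b ∈ (Finset.univ : Finset Bool),
        Complex.exp (2 * Real.pi * Complex.I * j * (if b then (1:ℂ) else -1) / (2*w:ℕ)))
        = 2 * Complex.cos ((((j:ℝ) * Real.pi / w : ℝ)) : ℂ) := by
      intro i
      rw [Fintype.sum_bool, Complex.two_cos]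
      simp only [reduceIte, Bool.false_eq_true, if_false]
      congr 1
      · congr 1
        push_cast
        field_simp
      · congr 1
        push_cast
        field_simp
    rw [Finset.prod_congr rfl fun i _ => hbool i, Finset.prod_const, Finset.card_univ,
      Fintype.card_fin]
    push_cast [Complex.ofReal_cos]
    ring
  have key2 : (∑ ε : Fin n → Bool, if (2*(w:ℤ)) ∣ Ssum n ε then (1:ℝ) else 0) * (2*(w:ℝ))
      = ∑ j ∈ Finset.range (2*w), (2 * Real.cos ((j:ℝ) * Real.pi / w)) ^ n := by
    apply Complex.ofReal_injective
    push_cast [apply_ite (fun x : ℝ => (x:ℂ))]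
    convert key using 2 <;> (push_cast [Complex.ofReal_cos]; try ring)
  have fold2 : ∑ j ∈ Finset.range (2*w), (2 * Real.cos ((j:ℝ) * Real.pi / w)) ^ n
      = 2 * ∑ k ∈ Finset.range w, (2 * Real.cos ((k:ℝ) * Real.pi / w)) ^ n := by
    rw [show 2*w = w + w by ring, Finset.sum_range_add]
    have step : ∀ k ∈ Finset.range w,
        (2 * Real.cos (((w + k : ℕ):ℝ) * Real.pi / w)) ^ n
          = (2 * Real.cos ((k:ℝ) * Real.pi / w)) ^ n := by
      intro k _
      have harg : ((w + k : ℕ):ℝ) * Real.pi / w = (k:ℝ) * Real.pi / w + Real.pi := by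
        push_cast
        field_simp
        ring
      rw [harg, Real.cos_add_pi,
        show (2:ℝ) * -Real.cos ((k:ℝ)*Real.pi/w) = -(2 * Real.cos ((k:ℝ)*Real.pi/w)) by ring,
        hn.neg_pow]
    rw [Finset.sum_congr rfl step, two_mul]
  have hS2 : (∑ ε : Fin n → Bool, if (2*(w:ℤ)) ∣ Ssum n ε then (1:ℝ) else 0) * (2*(w:ℝ))
      = 2 * (2^n * ∑ k ∈ Finset.range w, Real.cos ((k:ℝ) * Real.pi / w) ^ n) := by
    rw [key2, fold2]
    congr 1
    rw [Finset.mul_sum]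
    exact Finset.sum_congr rfl fun k _ => (mul_pow 2 _ n)
  rw [h1]
  have hw2 : (2:ℝ)*(w:ℝ) ≠ 0 := by
    simp [hw0]
  field_simp at hS2 ⊢
  simp only [show ∀ x : ℕ, Real.pi * (x:ℝ) = (x:ℝ) * Real.pi from fun x => mul_comm _ _]
  linarith [hS2]

/-- exact expression for `Z_{n,w}(2,2)` for even `n`. -/
theorem Z_two_two (w n : ℕ) (hw : 1 ≤ w) (hn : Even n) :
    Z n w 2 2 = 2 ^ n / (w : ℝ) *
      ∑ k ∈ Finset.range w,
        Real.cos ((k : ℝ) * Real.pi / (w : ℝ)) ^ n := by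
  rw [Z_eq_P w n hw, P_eq_Nc hw n 0, Nc_eval w n hw hn]
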